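/- For every n, there exists a graph with at most n vertices having at least ⌊√n − 1⌋!/2 minimal paths; hence the number of minimal paths in a graph on n vertices can grow super-polynomially (faster than any fixed power of n). -/

import Mathlib

open Classical in
/-- Vertex type of the bipartite graph `G k`: `V1 = Fin k` plus `V2` = unordered
pairs of distinct elements of `V1`. -/
abbrev GVert (k : ℕ) := Fin k ⊕ {p : Sym2 (Fin k) // ¬ p.IsDiag}

/-- The bipartite graph `G k`: `a ∈ V1` is adjacent to `p ∈ V2` iff `a ∈ p`. -/
def biG (k : ℕ) : SimpleGraph (GVert k) where
  Adj x y := ∃ (a : Fin k) (p : {p : Sym2 (Fin k) // ¬ p.IsDiag}),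
    a ∈ p.val ∧ ((x = Sum.inl a ∧ y = Sum.inr p) ∨ (x = Sum.inr p ∧ y = Sum.inl a))
  symm := ⟨by rintro x y ⟨a, p, hm, (⟨rfl, rfl⟩ | ⟨rfl, rfl⟩)⟩ <;> exact ⟨a, p, hm, by tauto⟩⟩
  loopless := ⟨by rintro x ⟨a, p, hm, (⟨rfl, h⟩ | ⟨rfl, h⟩)⟩ <;> simp_all⟩

/-- The `V2`-vertex `{a,b}` (junk value `inl a` if `a = b`). -/
def pairV {k : ℕ} (a b : Fin k) : GVert k :=
  if h : a = b then Sum.inl a else Sum.inr ⟨s(a, b), by simp [h]⟩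

/-- The alternating list of vertices `a₁, {a₁,a₂}, a₂, …` associated to a list in `V1`. -/
def altList {k : ℕ} : List (Fin k) → List (GVert k)
  | [] => []
  | [a] => [Sum.inl a]
  | a :: b :: rest => Sum.inl a :: pairV a b :: altList (b :: rest)

/-- The alternating path associated to a permutation of `Fin k`. -/
def permPath {k : ℕ} (σ : Equiv.Perm (Fin k)) : List (GVert k) :=
  altList ((List.finRange k).map σ)

/-- `L` is a path: consecutive vertices adjacent and no repeats. -/
def IsPathList {V : Type*} (G : SimpleGraph V) (L : List V) : Prop :=
  List.Chain' G.Adj L ∧ L.Nodup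

/-- `L` is a minimal path: no proper subsequence with the same endpoints is a path. -/
def IsMinimalPath {V : Type*} (G : SimpleGraph V) (L : List V) : Prop :=
  IsPathList G L ∧ ∀ L' : List V, L'.Sublist L → L'.head? = L.head? →
    L'.getLast? = L.getLast? → IsPathList G L' → L' = L

section Helpers

variable {k : ℕ}

lemma mem_of_getLast?' {α : Type*} : ∀ (l : List α) (x : α), l.getLast? = some x → x ∈ l
  | [], x, h => by simp at h
  | [y], x, h => by
    simp only [List.getLast?_singleton, Option.some.injEq] at h
    simp [h]
  | y :: z :: t, x, h => by
    rw [List.getLast?_cons_cons] at h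
    simp [mem_of_getLast?' (z :: t) x h]

lemma pairV_def {a b : Fin k} (h : a ≠ b) :
    pairV a b = Sum.inr ⟨s(a, b), by simp [h]⟩ := dif_neg h

lemma inl_mem_altList : ∀ (m : List (Fin k)) (c : Fin k), Sum.inl c ∈ altList m → c ∈ m
  | [], c, h => by simp [altList] at h
  | [a], c, h => by
    simp only [altList, List.mem_singleton, Sum.inl.injEq] at h
    simp [h]
  | a :: b :: r, c, h => by
    simp only [altList, List.mem_cons, Sum.inl.injEq] at h
    rcases h with h | h | h
    · simp [h]
    · by_cases hab : a = b
      · rw [pairV, dif_pos hab] at h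
        simp_all
      · rw [pairV_def hab] at h; simp at h
    · have := inl_mem_altList (b :: r) c h
      simp only [List.mem_cons] at this ⊢
      tauto

lemma inr_mem_altList : ∀ (m : List (Fin k)) (p : {p : Sym2 (Fin k) // ¬ p.IsDiag}),
    Sum.inr p ∈ altList m → ∀ e ∈ p.val, e ∈ m
  | [], p, h => by simp [altList] at h
  | [a], p, h => by simp [altList] at h
  | a :: b :: r, p, h => by
    simp only [altList, List.mem_cons] at h
    rcases h with h | h | h
    · simp at h
    · by_cases hab : a = b
      · rw [pairV, dif_pos hab] at h; simp at h
      · rw [pairV_def hab] at h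
        obtain rfl : p = ⟨s(a, b), by simp [hab]⟩ := Sum.inr.inj h
        intro e he
        simp only [Sym2.mem_iff] at he
        rcases he with rfl | rfl <;> simp
    · intro e he
      have := inr_mem_altList (b :: r) p h e he
      simp only [List.mem_cons] at this ⊢
      tauto

lemma altList_ne_nil (a : Fin k) (m : List (Fin k)) : altList (a :: m) ≠ [] := by
  cases m <;> simp [altList]

lemma altList_head? (a : Fin k) (m : List (Fin k)) :
    (altList (a :: m)).head? = some (Sum.inl a) := by
  cases m <;> rfl

lemma altList_getLast? (a b : Fin k) (r : List (Fin k)) :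
    (altList (a :: b :: r)).getLast? = (altList (b :: r)).getLast? := by
  obtain ⟨x, xs, hx⟩ := List.exists_cons_of_ne_nil (altList_ne_nil b r)
  show (Sum.inl a :: pairV a b :: altList (b :: r)).getLast? = _
  rw [hx, List.getLast?_cons_cons, List.getLast?_cons_cons]

lemma adj_inl_pair {a b : Fin k} (h : a ≠ b) : (biG k).Adj (Sum.inl a) (pairV a b) := by
  rw [pairV_def h]
  exact ⟨a, ⟨s(a, b), by simp [h]⟩, by simp, Or.inl ⟨rfl, rfl⟩⟩

lemma adj_pair_inl {a b : Fin k} (h : a ≠ b) : (biG k).Adj (pairV a b) (Sum.inl b) := by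
  rw [pairV_def h]
  exact ⟨b, ⟨s(a, b), by simp [h]⟩, by simp, Or.inr ⟨rfl, rfl⟩⟩

lemma adj_inl_right {a : Fin k} {y : GVert k} (h : (biG k).Adj (Sum.inl a) y) :
    ∃ p, y = Sum.inr p ∧ a ∈ p.val := by
  obtain ⟨a', p, hm, (⟨h1, rfl⟩ | ⟨h1, h2⟩)⟩ := h
  · obtain rfl : a = a' := Sum.inl.inj h1
    exact ⟨p, rfl, hm⟩
  · simp at h1

lemma adj_inr_right {p : {p : Sym2 (Fin k) // ¬ p.IsDiag}} {y : GVert k}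
    (h : (biG k).Adj (Sum.inr p) y) : ∃ c, y = Sum.inl c ∧ c ∈ p.val := by
  obtain ⟨a', p', hm, (⟨h1, h2⟩ | ⟨h1, rfl⟩)⟩ := h
  · simp at h1
  · obtain rfl : p = p' := Sum.inr.inj h1
    exact ⟨a', rfl, hm⟩

lemma chain'_altList : ∀ (m : List (Fin k)), m.Nodup → List.Chain' (biG k).Adj (altList m)
  | [], _ => by simp [altList, List.Chain']
  | [a], _ => by simp [altList, List.Chain']
  | a :: b :: r, h => by
    have hab : a ≠ b := by
      intro hh; rw [hh] at h; simp at h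
    have hnd : (b :: r).Nodup := h.of_cons
    show List.IsChain (biG k).Adj (Sum.inl a :: pairV a b :: altList (b :: r))
    rw [List.isChain_cons_cons]
    refine ⟨adj_inl_pair hab, ?_⟩
    rw [List.isChain_cons]
    refine ⟨?_, chain'_altList (b :: r) hnd⟩
    intro y hy
    rw [altList_head? b r] at hy
    obtain rfl : y = Sum.inl b := by simpa using hy.symm
    exact adj_pair_inl hab

lemma nodup_altList : ∀ (m : List (Fin k)), m.Nodup → (altList m).Nodup
  | [], _ => by simp [altList]
  | [a], _ => by simp [altList]
  | a :: b :: r, h => by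
    have hab : a ≠ b := by intro hh; rw [hh] at h; simp at h
    have hanr : a ∉ b :: r := by simp at h; simp; tauto
    have hnd : (b :: r).Nodup := h.of_cons
    show (Sum.inl a :: pairV a b :: altList (b :: r)).Nodup
    refine List.nodup_cons.mpr ⟨?_, List.nodup_cons.mpr ⟨?_, nodup_altList (b :: r) hnd⟩⟩
    · simp only [List.mem_cons]
      rintro (h1 | h1)
      · rw [pairV_def hab] at h1; simp at h1
      · exact hanr (inl_mem_altList _ _ h1)
    · intro h1
      rw [pairV_def hab] at h1
      exact hanr (inr_mem_altList _ _ h1 a (by simp))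

lemma minimal_altList : ∀ (m : List (Fin k)), m.Nodup →
    ∀ L' : List (GVert k), L'.Sublist (altList m) → L'.head? = (altList m).head? →
      L'.getLast? = (altList m).getLast? → IsPathList (biG k) L' → L' = altList m
  | [], _, L', hs, _, _, _ => by
    simpa [altList] using List.sublist_nil.mp (by simpa [altList] using hs)
  | [a], _, L', hs, hh, _, _ => by
    simp only [altList] at hs hh ⊢
    rcases List.sublist_singleton.mp hs with rfl | rfl
    · simp at hh
    · rfl
  | a :: b :: r, h, L', hs, hh, hl, hp => by
    have hab : a ≠ b := by intro hh'; rw [hh'] at h; simp at h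
    have hanr : a ∉ b :: r := by simp at h; simp; tauto
    have hnd : (b :: r).Nodup := h.of_cons
    have hAform : altList (a :: b :: r)
        = Sum.inl a :: Sum.inr ⟨s(a, b), by simp [hab]⟩ :: altList (b :: r) := by
      show Sum.inl a :: pairV a b :: altList (b :: r) = _
      rw [pairV_def hab]
    have hgl : (altList (a :: b :: r)).getLast? = (altList (b :: r)).getLast? :=
      altList_getLast? a b r
    rw [hAform] at hs hh ⊢
    rw [hgl] at hl
    simp only [List.head?_cons] at hh
    -- L' starts with inl a
    obtain ⟨x, T, rfl⟩ : ∃ x T, L' = x :: T := by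
      cases L' with
      | nil => simp at hh
      | cons x T => exact ⟨x, T, rfl⟩
    obtain rfl : x = Sum.inl a := by simpa using hh
    have hsT : T.Sublist (Sum.inr ⟨s(a, b), by simp [hab]⟩ :: altList (b :: r)) :=
      List.cons_sublist_cons.mp hs
    cases T with
    | nil =>
      exfalso
      simp only [List.getLast?_singleton] at hl
      have := inl_mem_altList (b :: r) a (mem_of_getLast?' _ _ hl.symm)
      exact hanr this
    | cons y U =>
      have hy_adj : (biG k).Adj (Sum.inl a) y := (List.isChain_cons_cons.mp hp.1).1
      obtain ⟨p, rfl, hap⟩ := adj_inl_right hy_adj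
      have hmem : Sum.inr p ∈ Sum.inr (⟨s(a, b), by simp [hab]⟩ :
          {p : Sym2 (Fin k) // ¬ p.IsDiag}) :: altList (b :: r) := hsT.subset (by simp)
      obtain rfl : p = ⟨s(a, b), by simp [hab]⟩ := by
        rcases List.mem_cons.mp hmem with h1 | h1
        · exact Sum.inr.inj h1
        · exact absurd (inr_mem_altList _ _ h1 a hap) hanr
      have hsU : U.Sublist (altList (b :: r)) := List.cons_sublist_cons.mp hsT
      cases U with
      | nil =>
        exfalso
        rw [List.getLast?_cons_cons, List.getLast?_singleton] at hl
        have := inr_mem_altList (b :: r) _ (mem_of_getLast?' _ _ hl.symm) a (by simp)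
        exact hanr this
      | cons z W =>
        have hz_adj : (biG k).Adj (Sum.inr ⟨s(a, b), by simp [hab]⟩) z :=
          (List.isChain_cons_cons.mp (List.isChain_cons_cons.mp hp.1).2).1
        obtain ⟨cc, rfl, hcc⟩ := adj_inr_right hz_adj
        have hcc' : cc = a ∨ cc = b := by simpa [Sym2.mem_iff] using hcc
        have hcc_ne : cc ≠ a := by
          intro hccq
          have hnd2 := hp.2
          rw [hccq] at hnd2
          simp at hnd2
        have hccb : cc = b := by tauto
        have hU := minimal_altList (b :: r) hnd (Sum.inl cc :: W) hsU
          (by rw [altList_head? b r, List.head?_cons, hccb])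
          (by
            rw [List.getLast?_cons_cons, List.getLast?_cons_cons] at hl
            exact hl)
          ⟨(List.isChain_cons_cons.mp (List.isChain_cons_cons.mp hp.1).2).2,
            (List.nodup_cons.mp (List.nodup_cons.mp hp.2).2).2⟩
        rw [hU]

lemma altList_extract : ∀ (m : List (Fin k)), m.Nodup →
    (altList m).filterMap (Sum.elim some (fun _ => none)) = m
  | [], _ => rfl
  | [a], _ => rfl
  | a :: b :: r, h => by
    have hab : a ≠ b := by intro hh; rw [hh] at h; simp at h
    show ((Sum.inl a : GVert k) :: pairV a b :: altList (b :: r)).filterMap _ = _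
    rw [pairV_def hab]
    simp only [List.filterMap_cons, Sum.elim_inl, Sum.elim_inr]
    rw [altList_extract (b :: r) h.of_cons]

lemma permPath_injective : Function.Injective (permPath (k := k)) := by
  intro σ τ h
  have h1 : ((List.finRange k).map σ).Nodup := (List.nodup_finRange k).map σ.injective
  have h2 : ((List.finRange k).map τ).Nodup := (List.nodup_finRange k).map τ.injective
  have h3 := congrArg (List.filterMap (Sum.elim some (fun _ => none))) h
  rw [permPath, permPath, altList_extract _ h1, altList_extract _ h2] at h3
  exact Equiv.ext fun i => List.map_inj_left.mp h3 i (List.mem_finRange i)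

end Helpers

theorem stmt8 :
    (∀ n : ℕ, ∃ (V : Type) (_ : Fintype V) (G : SimpleGraph V),
      Fintype.card V ≤ n ∧
      (Nat.floor (Real.sqrt n - 1)).factorial / 2 ≤
        Set.ncard {L : List V | IsMinimalPath G L}) ∧
    (∀ c : ℝ, 0 < c → ∀ d : ℕ, ∃ n : ℕ,
      ((Nat.floor (Real.sqrt n - 1)).factorial : ℝ) / 2 > c * (n : ℝ) ^ d) := by
  constructor
  · intro n
    set k := Nat.floor (Real.sqrt n - 1) with hk
    refine ⟨GVert k, inferInstance, biG k, ?_, ?_⟩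
    · -- card bound
      have hcd : Fintype.card {p : Sym2 (Fin k) // ¬ p.IsDiag}
          = (Fintype.card (Fin k)).choose 2 :=
        (Fintype.card_congr (Equiv.refl _)).trans Sym2.card_subtype_not_diag
      have hcard : Fintype.card (GVert k) = k + Nat.choose k 2 := by
        rw [Fintype.card_sum, hcd, Fintype.card_fin]
      rcases Nat.eq_zero_or_pos n with rfl | hn
      · have hk0 : k = 0 := by
          rw [hk]
          norm_num
        rw [hcard, hk0]; simp
      · have h1 : (1 : ℝ) ≤ Real.sqrt n := by
          rw [show (1 : ℝ) = Real.sqrt 1 by simp]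
          exact Real.sqrt_le_sqrt (by exact_mod_cast hn)
        have hk_le : (k : ℝ) ≤ Real.sqrt n - 1 := Nat.floor_le (by linarith)
        have hsqn : (k + 1) ^ 2 ≤ n := by
          have h2 : ((k : ℝ) + 1) ≤ Real.sqrt n := by linarith
          have h3 := Real.sq_sqrt (by positivity : (0 : ℝ) ≤ (n : ℝ))
          have h4 : (((k + 1) ^ 2 : ℕ) : ℝ) ≤ (n : ℝ) := by
            push_cast
            nlinarith [Real.sqrt_nonneg (n : ℝ)]
          exact_mod_cast h4
        have hch : Nat.choose k 2 ≤ k * k := by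
          rw [Nat.choose_two_right]
          exact le_trans (Nat.div_le_self _ _) (Nat.mul_le_mul_left k (Nat.sub_le k 1))
        have e : (k + 1) ^ 2 = k * k + 2 * k + 1 := by ring
        rw [hcard]
        omega
    · -- count
      have hfin : {L : List (GVert k) | IsMinimalPath (biG k) L}.Finite := by
        apply (List.finite_length_le (GVert k) (Fintype.card (GVert k))).subset
        intro L hL
        exact hL.1.2.length_le_card
      have hsub : Set.range (permPath (k := k)) ⊆ {L | IsMinimalPath (biG k) L} := by
        rintro _ ⟨σ, rfl⟩
        have hnd : ((List.finRange k).map σ).Nodup := (List.nodup_finRange k).map σ.injective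
        exact ⟨⟨chain'_altList _ hnd, nodup_altList _ hnd⟩, minimal_altList _ hnd⟩
      have hcount : (Set.range (permPath (k := k))).ncard = Nat.factorial k := by
        rw [← Set.image_univ, Set.ncard_image_of_injective _ permPath_injective,
          Set.ncard_univ, Nat.card_eq_fintype_card, Fintype.card_perm, Fintype.card_fin]
      calc Nat.factorial k / 2 ≤ Nat.factorial k := Nat.div_le_self _ _
        _ = _ := hcount.symm
        _ ≤ _ := Set.ncard_le_ncard hsub hfin
  · intro c hc d
    have hev := FloorSemiring.eventually_mul_pow_lt_factorial_sub (K := ℝ) (2 * c) ((4 : ℝ) ^ d) 0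
    obtain ⟨m, hm1, hm2⟩ := (hev.and (Filter.eventually_ge_atTop 1)).exists
    refine ⟨(m + 1) ^ 2, ?_⟩
    have hcast : (((m + 1) ^ 2 : ℕ) : ℝ) = ((m : ℝ) + 1) ^ 2 := by push_cast; ring
    have hsqrt : Real.sqrt (((m + 1) ^ 2 : ℕ) : ℝ) = (m : ℝ) + 1 := by
      rw [hcast]; exact Real.sqrt_sq (by positivity)
    rw [hsqrt]
    have hfl : Nat.floor ((m : ℝ) + 1 - 1) = m := by norm_num
    rw [hfl, hcast]
    -- now: m ! / 2 > c * (((m:ℝ)+1)^2)^d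
    have h2p : (m : ℝ) + 1 ≤ (2 : ℝ) ^ m := by
      have hn : m + 1 ≤ 2 ^ m := Nat.lt_two_pow_self
      exact_mod_cast hn
    have hpow : ((m : ℝ) + 1) ^ (2 * d) ≤ ((4 : ℝ) ^ d) ^ m := by
      calc ((m : ℝ) + 1) ^ (2 * d) ≤ ((2 : ℝ) ^ m) ^ (2 * d) :=
            pow_le_pow_left₀ (by positivity) h2p _
        _ = ((4 : ℝ) ^ d) ^ m := by
            rw [show (4 : ℝ) = 2 ^ 2 by norm_num, ← pow_mul, ← pow_mul, ← pow_mul]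
            congr 1
            ring
    simp only [Nat.sub_zero] at hm1
    have key : 2 * c * ((m : ℝ) + 1) ^ (2 * d) < (Nat.factorial m : ℝ) := by
      calc 2 * c * ((m : ℝ) + 1) ^ (2 * d) ≤ 2 * c * ((4 : ℝ) ^ d) ^ m := by
            apply mul_le_mul_of_nonneg_left hpow (by linarith)
        _ < _ := hm1
    have hrw : (((m : ℝ) + 1) ^ 2) ^ d = ((m : ℝ) + 1) ^ (2 * d) := by
      rw [← pow_mul]
    rw [gt_iff_lt, lt_div_iff₀ (by norm_num : (0 : ℝ) < 2), hrw]
    linarith
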